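/- Let p = (z, t) ∈ ℂ × ℝ satisfy |z|⁴ + t² = 1 and d(p, (1,0)) = 1, where d is the Korányi distance, and set c = |z|². Then the fourth power of the Korányi distance from p to its antipodal point j₁(p) = (conj(z), −t) equals d(p, j₁(p))⁴ = (8c³ − 12c² + 12c + 7) / (2(1 + c)). -/

import Mathlib

open Complex Real

/-- The Korányi (Heisenberg) distance on ℂ × ℝ. -/
noncomputable def kd (p q : ℂ × ℝ) : ℝ :=
  ((‖p.1 - q.1‖) ^ 4 +
    (p.2 - q.2 + 2 * (p.1 * (starRingEnd ℂ) q.1).im) ^ 2) ^ ((1 : ℝ) / 4)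

lemma kd_pow (p q : ℂ × ℝ) : kd p q ^ 4 = (‖p.1 - q.1‖) ^ 4 +
    (p.2 - q.2 + 2 * (p.1 * (starRingEnd ℂ) q.1).im) ^ 2 := by
  have h : (0:ℝ) ≤ (‖p.1 - q.1‖) ^ 4 +
      (p.2 - q.2 + 2 * (p.1 * (starRingEnd ℂ) q.1).im) ^ 2 := by positivity
  rw [kd, ← Real.rpow_natCast (_ ^ ((1:ℝ)/4)) 4, ← Real.rpow_mul h]
  norm_num

theorem antipodal_distance_formula (z : ℂ) (t : ℝ)
    (hsph : (‖z‖) ^ 4 + t ^ 2 = 1)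
    (hd : kd (z, t) ((1 : ℂ), (0 : ℝ)) = 1) :
    (kd (z, t) ((starRingEnd ℂ) z, -t)) ^ 4 =
      (8 * ((‖z‖) ^ 2) ^ 3 - 12 * ((‖z‖) ^ 2) ^ 2
          + 12 * (‖z‖) ^ 2 + 7) /
        (2 * (1 + (‖z‖) ^ 2)) := by
  set x := z.re with hx
  set y := z.im with hy
  have habs : ‖z‖ ^ 2 = x ^ 2 + y ^ 2 := by
    rw [Complex.sq_norm, Complex.normSq_apply]; ring
  have h1 : (x ^ 2 + y ^ 2) ^ 2 + t ^ 2 = 1 := by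
    have : ‖z‖ ^ 4 = (x ^ 2 + y ^ 2) ^ 2 := by
      rw [show (4:ℕ) = 2 * 2 from rfl, pow_mul, habs]
    linarith [hsph, this]
  have hd4 : kd (z, t) ((1 : ℂ), (0 : ℝ)) ^ 4 = 1 := by rw [hd]; norm_num
  rw [kd_pow] at hd4
  simp only [map_one, mul_one] at hd4
  have habs1 : ‖z - 1‖ ^ 4 = ((x - 1) ^ 2 + y ^ 2) ^ 2 := by
    rw [show (4:ℕ) = 2 * 2 from rfl, pow_mul, Complex.sq_norm, Complex.normSq_apply]
    simp [Complex.sub_re, Complex.sub_im, ← hx, ← hy]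
    ring
  have h2 : ((x - 1) ^ 2 + y ^ 2) ^ 2 + (t + 2 * y) ^ 2 = 1 := by
    have : (z : ℂ).im = y := rfl
    rw [habs1] at hd4
    convert hd4 using 3 <;> simp [this] <;> ring
  rw [kd_pow]
  have habs2 : ‖z - (starRingEnd ℂ) z‖ ^ 4 = 16 * y ^ 4 := by
    rw [show (4:ℕ) = 2 * 2 from rfl, pow_mul, Complex.sq_norm, Complex.normSq_apply]
    simp [Complex.sub_re, Complex.sub_im, Complex.conj_re, Complex.conj_im, ← hx, ← hy]
    ring
  have him : (z * (starRingEnd ℂ) ((starRingEnd ℂ) z)).im = 2 * x * y := by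
    rw [Complex.conj_conj, Complex.mul_im, ← hx, ← hy]; ring
  simp only [habs2, him]
  have hc : (0:ℝ) < 2 * (1 + ‖z‖ ^ 2) := by positivity
  rw [habs, eq_div_iff (ne_of_gt (by rw [habs] at hc; exact hc))]
  have hL : t - -t + 2 * (2 * x * y) = 2 * t + 4 * x * y := by ring
  rw [hL]
  linear_combination (4*x*((x^2+y^2)+1) - 4*t*y + 6*(x^2+y^2) + 1) * (h2 - h1)
    - (16*y^2 + 8*(x^2+y^2) + 8) * h1 + (16 + 16*x^2 + 48*y^2) * h1
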